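/- Let σ ≥ 0, σ' ≥ 0 and β, β', κ ∈ ℝ, and define f : ℝ × ℤ/2ℤ → ℂ by f(s,0) = exp(−σs² + iβs) and f(s,1) = κ·exp(−σ's² + iβ's). Then there exists a finite signed measure μ on ℝ × ℤ/2ℤ whose characteristic function equals f, i.e. μ̂(s,l) = f(s,l) for all (s,l) ∈ ℝ × ℤ/2ℤ. -/

import Mathlib

open MeasureTheory Complex ProbabilityTheory Real
open scoped NNReal ENNReal

noncomputable section

/-- The character of `ℝ × ℤ/2ℤ` with parameter `(s, l)`, evaluated at `(t, k)`:
`exp(i s t)·(−1)^{l k}`. -/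
def charZ2 (s : ℝ) (l : ZMod 2) (p : ℝ × ZMod 2) : ℂ :=
  Complex.exp (Complex.I * s * p.1) * (-1 : ℂ) ^ (l * p.2).val

/-- The characteristic function of a finite signed measure on `ℝ × ℤ/2ℤ`, defined through
its Jordan decomposition. -/
def sCharZ2 (μ : SignedMeasure (ℝ × ZMod 2)) (s : ℝ) (l : ZMod 2) : ℂ :=
  (∫ p, charZ2 s l p ∂μ.toJordanDecomposition.posPart) -
    (∫ p, charZ2 s l p ∂μ.toJordanDecomposition.negPart)

lemma integral_cexp_gaussianReal (m : ℝ) (v : ℝ≥0) (s : ℝ) :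
    ∫ t : ℝ, Complex.exp (Complex.I * s * t) ∂(gaussianReal m v)
      = Complex.exp (Complex.I * m * s - (v:ℝ) * s ^ 2 / 2) := by
  by_cases hv : v = 0
  · subst hv
    rw [gaussianReal_zero_var, integral_dirac]
    push_cast
    ring_nf
  · have hv' : (0:ℝ) < (v:ℝ) := by positivity
    rw [gaussianReal_of_var_ne_zero _ hv]
    have hpdf : (gaussianPDF m v)
        = fun x => ((fun x => (gaussianPDFReal m v x).toNNReal) x : ℝ≥0∞) := rfl
    rw [hpdf, integral_withDensity_eq_integral_smul
      ((measurable_gaussianPDFReal m v).real_toNNReal)]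
    have hb : ((-(1/(2*(v:ℝ))) : ℂ)).re < 0 := by
      simp only [neg_re, ofReal_re, neg_lt, neg_neg, ← ofReal_ofNat, ← ofReal_mul, ← ofReal_div,
        ← ofReal_one, ← ofReal_neg]
      norm_num
      positivity
    have key := integral_cexp_quadratic hb ((m/(v:ℝ) : ℝ) + Complex.I * s)
      (-(m^2/(2*(v:ℝ)) : ℝ))
    have hint : (fun t : ℝ => (gaussianPDFReal m v t).toNNReal • cexp (I * s * t))
        = fun t : ℝ => ((Real.sqrt (2 * π * v))⁻¹ : ℂ) *
            cexp ((-(1/(2*(v:ℝ))) : ℂ) * t ^ 2 + ((m/(v:ℝ) : ℝ) + Complex.I * s) * t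
              + (-(m^2/(2*(v:ℝ)) : ℝ))) := by
      funext t
      rw [NNReal.smul_def, Real.coe_toNNReal _ (gaussianPDFReal_nonneg m v t)]
      have hvc : ((v:ℝ):ℂ) ≠ 0 := by exact_mod_cast hv'.ne'
      have harg : ((-(t-m)^2/(2*(v:ℝ)) : ℝ) : ℂ) + I*s*t
          = (-(1/(2*(v:ℝ))) : ℂ) * t ^ 2 + ((m/(v:ℝ) : ℝ) + Complex.I * s) * t
              + (-(m^2/(2*(v:ℝ)) : ℝ)) := by
        push_cast
        field_simp
        ring
      rw [gaussianPDFReal, real_smul, ofReal_mul, ofReal_exp, mul_assoc,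
        ← Complex.exp_add, harg, ofReal_inv]
    rw [hint, integral_const_mul, key]
    have hsq : (0:ℝ) < 2 * π * v := by positivity
    have hconst : ((Real.sqrt (2*π*(v:ℝ)) : ℝ) : ℂ)⁻¹ *
        ((π : ℂ) / - (-(1/(2*(v:ℝ)) : ℂ))) ^ (1/2 : ℂ) = 1 := by
      have h1 : ((π : ℂ) / - (-(1/(2*(v:ℝ)) : ℂ))) = ((2 * π * (v:ℝ) : ℝ) : ℂ) := by
        have hvc : ((v:ℝ):ℂ) ≠ 0 := by exact_mod_cast hv'.ne'
        push_cast
        field_simp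
      rw [h1]
      have h2 : ((2 * π * (v:ℝ) : ℝ) : ℂ) ^ (1/2 : ℂ)
          = ((Real.sqrt (2*π*(v:ℝ)) : ℝ) : ℂ) := by
        rw [show (1/2 : ℂ) = ((1/2 : ℝ) : ℂ) by norm_num,
          ← Complex.ofReal_cpow hsq.le]
        norm_cast
        exact (Real.sqrt_eq_rpow _).symm
      rw [h2]
      rw [inv_mul_cancel₀]
      exact_mod_cast (Real.sqrt_pos.mpr hsq).ne'
    have hexp : (-(m^2/(2*(v:ℝ)) : ℝ) : ℂ) -
        (((m/(v:ℝ) : ℝ) : ℂ) + I*s)^2 / (4 * (-(1/(2*(v:ℝ))):ℂ))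
          = I*m*s - (v:ℝ)*s^2/2 := by
      have hvc : ((v:ℝ):ℂ) ≠ 0 := by exact_mod_cast hv'.ne'
      push_cast
      field_simp
      ring_nf
      linear_combination (4 * ((v:ℝ):ℂ)^2 * (s:ℂ)^2) * Complex.I_sq
    rw [← mul_assoc, hconst, one_mul, hexp]


lemma measurable_charZ2 (s : ℝ) (l : ZMod 2) : Measurable (charZ2 s l) := by
  apply Measurable.mul
  · exact Complex.measurable_exp.comp
      (measurable_const.mul (Complex.measurable_ofReal.comp measurable_fst))
  · exact (Measurable.of_discrete (f := fun k : ZMod 2 => ((-1 : ℂ) ^ (l * k).val))).comp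
      measurable_snd

lemma norm_charZ2 (s : ℝ) (l : ZMod 2) (p : ℝ × ZMod 2) : ‖charZ2 s l p‖ = 1 := by
  rw [charZ2, norm_mul, norm_pow, norm_neg, norm_one, one_pow, mul_one,
    Complex.norm_exp]
  simp [mul_comm]

lemma integrable_charZ2 (s : ℝ) (l : ZMod 2) (ν : Measure (ℝ × ZMod 2)) [IsFiniteMeasure ν] :
    Integrable (charZ2 s l) ν := by
  refine Integrable.mono' (integrable_const 1) (measurable_charZ2 s l).aestronglyMeasurable ?_
  exact ae_of_all _ fun p => le_of_eq (norm_charZ2 s l p)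

lemma sCharZ2_sub (P N : Measure (ℝ × ZMod 2)) [IsFiniteMeasure P] [IsFiniteMeasure N]
    (s : ℝ) (l : ZMod 2) :
    sCharZ2 (P.toSignedMeasure - N.toSignedMeasure) s l
      = (∫ p, charZ2 s l p ∂P) - ∫ p, charZ2 s l p ∂N := by
  set μ := P.toSignedMeasure - N.toSignedMeasure with hμ
  have h0 : μ.toJordanDecomposition.posPart.toSignedMeasure -
      μ.toJordanDecomposition.negPart.toSignedMeasure = P.toSignedMeasure - N.toSignedMeasure := by
    rw [← MeasureTheory.JordanDecomposition.toSignedMeasure,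
      μ.toSignedMeasure_toJordanDecomposition]
  have h1 : (μ.toJordanDecomposition.posPart + N).toSignedMeasure
      = (P + μ.toJordanDecomposition.negPart).toSignedMeasure := by
    rw [Measure.toSignedMeasure_add, Measure.toSignedMeasure_add]
    exact sub_eq_sub_iff_add_eq_add.mp h0
  have h2 : μ.toJordanDecomposition.posPart + N = P + μ.toJordanDecomposition.negPart :=
    Measure.toSignedMeasure_eq_toSignedMeasure_iff.mp h1
  have h3 : (∫ p, charZ2 s l p ∂μ.toJordanDecomposition.posPart) + ∫ p, charZ2 s l p ∂N
      = (∫ p, charZ2 s l p ∂P) + ∫ p, charZ2 s l p ∂μ.toJordanDecomposition.negPart := by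
    rw [← integral_add_measure (integrable_charZ2 s l _) (integrable_charZ2 s l _),
      ← integral_add_measure (integrable_charZ2 s l _) (integrable_charZ2 s l _), h2]
  rw [sCharZ2]
  linear_combination h3


theorem exists_signed_measure_with_piecewise_gaussian_charFun
    (σ σ' : ℝ) (hσ : 0 ≤ σ) (hσ' : 0 ≤ σ') (β β' κ : ℝ) :
    ∃ μ : SignedMeasure (ℝ × ZMod 2), ∀ (s : ℝ) (l : ZMod 2),
      sCharZ2 μ s l =
        if l = 0 then Complex.exp (-(σ : ℂ) * (s : ℂ) ^ 2 + Complex.I * (β : ℂ) * (s : ℂ))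
        else (κ : ℂ) *
          Complex.exp (-(σ' : ℂ) * (s : ℂ) ^ 2 + Complex.I * (β' : ℂ) * (s : ℂ)) := by
  set v : ℝ≥0 := (2*σ).toNNReal with hv
  set v' : ℝ≥0 := (2*σ').toNNReal with hv'
  set k1 : ℝ≥0 := (κ/2).toNNReal with hk1
  set k2 : ℝ≥0 := (-(κ/2)).toNNReal with hk2
  have hkk : (k1:ℝ) - (k2:ℝ) = κ/2 := by
    rcases le_total 0 (κ/2) with h|h
    · rw [hk1, hk2, Real.coe_toNNReal _ h, Real.toNNReal_of_nonpos (by linarith)]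
      simp
    · rw [hk1, hk2, Real.toNNReal_of_nonpos h, Real.coe_toNNReal _ (by linarith)]
      simp
  have hvr : ((v:ℝ) : ℝ) = 2*σ := Real.coe_toNNReal _ (by linarith)
  have hvr' : ((v':ℝ) : ℝ) = 2*σ' := Real.coe_toNNReal _ (by linarith)
  set g0 : Measure (ℝ × ZMod 2) := (gaussianReal β v).map (fun t => (t, (0 : ZMod 2))) with hg0
  set g1 : Measure (ℝ × ZMod 2) := (gaussianReal β v).map (fun t => (t, (1 : ZMod 2))) with hg1
  set h0 : Measure (ℝ × ZMod 2) := (gaussianReal β' v').map (fun t => (t, (0 : ZMod 2))) with hh0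
  set h1 : Measure (ℝ × ZMod 2) := (gaussianReal β' v').map (fun t => (t, (1 : ZMod 2))) with hh1
  haveI : IsFiniteMeasure g0 := Measure.isFiniteMeasure_map _ _
  haveI : IsFiniteMeasure g1 := Measure.isFiniteMeasure_map _ _
  haveI : IsFiniteMeasure h0 := Measure.isFiniteMeasure_map _ _
  haveI : IsFiniteMeasure h1 := Measure.isFiniteMeasure_map _ _
  set P : Measure (ℝ × ZMod 2) :=
    (2:ℝ≥0)⁻¹ • g0 + ((2:ℝ≥0)⁻¹ • g1 + (k1 • h0 + k2 • h1)) with hP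
  set N : Measure (ℝ × ZMod 2) := k2 • h0 + k1 • h1 with hN
  refine ⟨P.toSignedMeasure - N.toSignedMeasure, fun s l => ?_⟩
  rw [sCharZ2_sub]
  have hmk : Measurable (fun t : ℝ => (t, (0 : ZMod 2))) :=
    measurable_id.prodMk measurable_const
  have hmk1 : Measurable (fun t : ℝ => (t, (1 : ZMod 2))) :=
    measurable_id.prodMk measurable_const
  have hmap : ∀ (m : ℝ) (w : ℝ≥0) (k : ZMod 2),
      (∫ p, charZ2 s l p ∂((gaussianReal m w).map (fun t => (t, k))))
        = Complex.exp (Complex.I * m * s - (w:ℝ) * s ^ 2 / 2) * (-1:ℂ) ^ (l*k).val := by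
    intro m w k
    rw [integral_map (φ := fun t : ℝ => (t, k)) measurable_prodMk_right.aemeasurable
      (measurable_charZ2 s l).aestronglyMeasurable]
    simp only [charZ2]
    rw [integral_mul_const, integral_cexp_gaussianReal]
  rw [hP, hN]
  rw [integral_add_measure (integrable_charZ2 s l _) (integrable_charZ2 s l _),
    integral_add_measure (integrable_charZ2 s l _) (integrable_charZ2 s l _),
    integral_add_measure (integrable_charZ2 s l _) (integrable_charZ2 s l _),
    integral_add_measure (integrable_charZ2 s l _) (integrable_charZ2 s l _)]
  rw [integral_smul_nnreal_measure, integral_smul_nnreal_measure, integral_smul_nnreal_measure,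
    integral_smul_nnreal_measure, integral_smul_nnreal_measure, integral_smul_nnreal_measure]
  rw [hg0, hg1, hh0, hh1, hmap, hmap, hmap, hmap]
  have hGg : Complex.exp (Complex.I * β * s - ((v:ℝ):ℝ) * s ^ 2 / 2)
      = Complex.exp (-(σ : ℂ) * (s : ℂ) ^ 2 + Complex.I * (β : ℂ) * (s : ℂ)) := by
    rw [hvr]; congr 1; push_cast; ring
  have hGh : Complex.exp (Complex.I * β' * s - ((v':ℝ):ℝ) * s ^ 2 / 2)
      = Complex.exp (-(σ' : ℂ) * (s : ℂ) ^ 2 + Complex.I * (β' : ℂ) * (s : ℂ)) := by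
    rw [hvr']; congr 1; push_cast; ring
  rw [hGg, hGh]
  have hkkC : ((k1:ℝ):ℂ) - ((k2:ℝ):ℂ) = (κ:ℂ)/2 := by exact_mod_cast hkk
  have hl : l = 0 ∨ l = 1 := by
    fin_cases l
    · exact Or.inl rfl
    · exact Or.inr rfl
  simp only [NNReal.smul_def, real_smul]
  rcases hl with rfl | rfl
  · simp only [if_pos rfl, zero_mul, ZMod.val_zero, pow_zero, mul_one]
    push_cast
    ring
  · rw [if_neg (by decide)]
    have e0 : (((1:ZMod 2) * (0:ZMod 2)).val) = 0 := by decide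
    have e1 : (((1:ZMod 2) * (1:ZMod 2)).val) = 1 := by decide
    rw [e0, e1, pow_zero, pow_one]
    push_cast
    linear_combination (2 * Complex.exp (-(σ' : ℂ) * (s : ℂ) ^ 2
      + Complex.I * (β' : ℂ) * (s : ℂ))) * hkkC

end
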